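/- (Weil) Let F be a number field, W a projective algebraic variety over F, D a very ample divisor on W, and let γ = {s_0, …, s_m} and γ' = {s_0', …, s_m'} be two bases over F of the space of global sections Γ(W, O(D)). Then there exist two positive constants c_1, c_2 such that c_1 ≤ H(W, D, γ, x) / H(W, D, γ', x) ≤ c_2 for all x ∈ W(F). -/

import Mathlib

/-!
Weil's theorem on comparison of heights attached to two bases of the space of global
sections of a very ample divisor.

Formalization conventions:

* `F` is a number field.  The absolute height of a coordinate vector
  `x = (x₀, …, x_m) ∈ F^{m+1}` is `H(x) = ∏_{v ∈ Val(F)} max_i |x_i|_v`.  The product over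
  the archimedean places is `∏_w (max_i w (x_i))^{mult w}` and the product over the
  nonarchimedean places equals the inverse of the absolute norm of the fractional ideal
  generated by the coordinates.  This is the definition `heightVec` below.
* Since `D` is very ample, the basis `γ = {s₀, …, s_m}` of `Γ(W, O(D))` embeds `W` into
  `ℙ^m` in such a way that the sections `s_i` become the homogeneous coordinates; the
  variety `W` is thus modelled by an arbitrary set `W` of points of `ℙ^m(F)`
  (`Projectivization F (Fin (m+1) → F)`), and the height `H(W, D, γ, x)` is the height of
  a coordinate vector representing `x`.
* A second basis `γ' = {s₀', …, s_m'}` of the same space of sections is obtained from `γ`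
  by an invertible base-change matrix `A` over `F`; the corresponding height of `x` is the
  height of the coordinate vector `A.mulVec x.rep`.

The conclusion: there are positive constants `c₁, c₂` with
`c₁ ≤ H(W, D, γ, x) / H(W, D, γ', x) ≤ c₂` for all `x ∈ W(F)`.
-/

open MvPolynomial NumberField
open scoped nonZeroDivisors

/-- The absolute multiplicative height `∏_{v ∈ Val(F)} max_i |x_i|_v` of a coordinate
vector over a number field `F`: the archimedean part is the product over the infinite
places (with their multiplicities), and the nonarchimedean part is the inverse of the
absolute norm of the fractional ideal generated by the coordinates. -/
noncomputable def heightVec (F : Type*) [Field F] [NumberField F] {ι : Type*} [Fintype ι]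
    (x : ι → F) : ℝ :=
  (∏ w : InfinitePlace F, (⨆ i, w (x i)) ^ w.mult) *
    ((FractionalIdeal.absNorm (∑ i, FractionalIdeal.spanSingleton (𝓞 F)⁰ (x i)) : ℚ) : ℝ)⁻¹

section aux

variable {F : Type*} [Field F] [NumberField F]

private lemma fi_sum_le {ι : Type*} {s : Finset ι} {f : ι → FractionalIdeal (𝓞 F)⁰ F}
    {c : FractionalIdeal (𝓞 F)⁰ F} (h : ∀ i ∈ s, f i ≤ c) : ∑ i ∈ s, f i ≤ c := by
  classical
  induction s using Finset.induction_on with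
  | empty => simpa using FractionalIdeal.zero_le c
  | insert _ _ hx ih =>
      rw [Finset.sum_insert hx, ← FractionalIdeal.sup_eq_add]
      exact sup_le (h _ (Finset.mem_insert_self _ _))
        (ih fun i hi => h i (Finset.mem_insert_of_mem hi))

private lemma fi_le_sum {ι : Type*} {s : Finset ι} (f : ι → FractionalIdeal (𝓞 F)⁰ F)
    {j : ι} (hj : j ∈ s) : f j ≤ ∑ i ∈ s, f i := by
  classical
  rw [← Finset.add_sum_erase s f hj, ← FractionalIdeal.sup_eq_add]
  exact le_sup_left

private lemma fi_absNorm_pos {I : FractionalIdeal (𝓞 F)⁰ F} (hI : I ≠ 0) :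
    0 < FractionalIdeal.absNorm I :=
  lt_of_le_of_ne (FractionalIdeal.absNorm_nonneg _)
    (fun h => hI (FractionalIdeal.absNorm_eq_zero_iff.mp h.symm))

private lemma fi_ideal_ne_zero {ι : Type*} [Fintype ι] {x : ι → F} (hx : x ≠ 0) :
    (∑ i, FractionalIdeal.spanSingleton (𝓞 F)⁰ (x i)) ≠ 0 := by
  obtain ⟨i₀, hi₀⟩ : ∃ i, x i ≠ 0 := by
    by_contra h; push_neg at h; exact hx (funext h)
  intro h0
  have hle := fi_le_sum (fun i => FractionalIdeal.spanSingleton (𝓞 F)⁰ (x i))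
    (Finset.mem_univ i₀)
  rw [h0] at hle
  exact hi₀ (FractionalIdeal.spanSingleton_eq_zero_iff.mp
    (le_antisymm hle (FractionalIdeal.zero_le _)))

private lemma fi_mem_sum {ι : Type*} [Fintype ι] (x : ι → F) (j : ι) :
    x j ∈ ∑ i, FractionalIdeal.spanSingleton (𝓞 F)⁰ (x i) :=
  FractionalIdeal.spanSingleton_le_iff_mem.mp
    (fi_le_sum (fun i => FractionalIdeal.spanSingleton (𝓞 F)⁰ (x i)) (Finset.mem_univ j))

private lemma fi_absNorm_le_of_le {I K : FractionalIdeal (𝓞 F)⁰ F} (hI : I ≠ 0) (hK : K ≠ 0)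
    (h : I ≤ K) : FractionalIdeal.absNorm K ≤ FractionalIdeal.absNorm I := by
  have hinv : K * K⁻¹ = 1 := mul_inv_cancel₀ hK
  have hK' : K⁻¹ ≠ 0 := by
    intro h0; rw [h0, mul_zero] at hinv; exact zero_ne_one hinv
  have h1 : I * K⁻¹ ≤ 1 := by
    calc I * K⁻¹ ≤ K * K⁻¹ := mul_left_mono (a := K⁻¹) h
    _ = 1 := hinv
  obtain ⟨N, hN⟩ := FractionalIdeal.le_one_iff_exists_coeIdeal.mp h1
  have hIK : I * K⁻¹ ≠ 0 := mul_ne_zero hI hK'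
  have hN0 : N ≠ ⊥ := by
    rintro rfl
    rw [← hN] at hIK
    simp at hIK
  have hNnorm : (1 : ℚ) ≤ (Ideal.absNorm N : ℚ) := by
    exact_mod_cast Nat.one_le_iff_ne_zero.mpr (fun h0 => hN0 (Ideal.absNorm_eq_zero_iff.mp h0))
  have key : FractionalIdeal.absNorm I
      = (Ideal.absNorm N : ℚ) * FractionalIdeal.absNorm K := by
    have hI' : I = (N : FractionalIdeal (𝓞 F)⁰ F) * K := by
      rw [hN, mul_assoc, mul_comm K⁻¹ K, hinv, mul_one]
    rw [hI', map_mul, FractionalIdeal.coeIdeal_absNorm]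
  rw [key]
  exact le_mul_of_one_le_left (FractionalIdeal.absNorm_nonneg K) hNnorm

private lemma heightVec_pos {ι : Type*} [Fintype ι] {x : ι → F} (hx : x ≠ 0) :
    0 < heightVec F x := by
  obtain ⟨i₀, hi₀⟩ : ∃ i, x i ≠ 0 := by
    by_contra h; push_neg at h; exact hx (funext h)
  apply mul_pos
  · apply Finset.prod_pos
    intro w _
    apply pow_pos
    exact lt_of_lt_of_le (InfinitePlace.pos_iff.mpr hi₀)
      (le_ciSup (f := fun i => w (x i)) (Set.Finite.bddAbove (Set.finite_range _)) i₀)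
  · rw [inv_pos]
    exact_mod_cast fi_absNorm_pos (fi_ideal_ne_zero hx)

private lemma heightVec_mulVec_le {n : ℕ} (A : Matrix (Fin (n + 1)) (Fin (n + 1)) F) :
    ∃ C : ℝ, 0 < C ∧ ∀ x : Fin (n + 1) → F, x ≠ 0 → A.mulVec x ≠ 0 →
      heightVec F (A.mulVec x) ≤ C * heightVec F x := by
  classical
  set J : FractionalIdeal (𝓞 F)⁰ F :=
    (∑ i : Fin (n + 1), ∑ j : Fin (n + 1), FractionalIdeal.spanSingleton (𝓞 F)⁰ (A i j)) + 1
    with hJdef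
  have hone : (1 : FractionalIdeal (𝓞 F)⁰ F) ≤ J := by
    rw [hJdef, ← FractionalIdeal.sup_eq_add]; exact le_sup_right
  have hJ0 : J ≠ 0 := by
    intro h0
    have h1 : (1 : F) ∈ J := hone (FractionalIdeal.one_mem_one _)
    rw [h0] at h1
    exact one_ne_zero ((FractionalIdeal.mem_zero_iff _).mp h1)
  have hJpos : (0 : ℚ) < FractionalIdeal.absNorm J := fi_absNorm_pos hJ0
  have hAmem : ∀ i j, A i j ∈ J := by
    intro i j
    have h1 : FractionalIdeal.spanSingleton (𝓞 F)⁰ (A i j)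
        ≤ ∑ j' : Fin (n + 1), FractionalIdeal.spanSingleton (𝓞 F)⁰ (A i j') :=
      fi_le_sum (fun j' => FractionalIdeal.spanSingleton (𝓞 F)⁰ (A i j')) (Finset.mem_univ j)
    have h2 : (∑ j' : Fin (n + 1), FractionalIdeal.spanSingleton (𝓞 F)⁰ (A i j'))
        ≤ ∑ i' : Fin (n + 1), ∑ j' : Fin (n + 1),
            FractionalIdeal.spanSingleton (𝓞 F)⁰ (A i' j') :=
      fi_le_sum (fun i' => ∑ j' : Fin (n + 1),
        FractionalIdeal.spanSingleton (𝓞 F)⁰ (A i' j')) (Finset.mem_univ i)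
    have h3 : (∑ i' : Fin (n + 1), ∑ j' : Fin (n + 1),
        FractionalIdeal.spanSingleton (𝓞 F)⁰ (A i' j')) ≤ J := by
      rw [hJdef, ← FractionalIdeal.sup_eq_add]; exact le_sup_left
    exact FractionalIdeal.spanSingleton_le_iff_mem.mp (h1.trans (h2.trans h3))
  refine ⟨(∏ w : InfinitePlace F,
      ((∑ p : Fin (n + 1) × Fin (n + 1), w (A p.1 p.2)) + 1) ^ w.mult)
      * ((FractionalIdeal.absNorm J : ℚ) : ℝ)⁻¹, ?_, ?_⟩
  · apply mul_pos
    · apply Finset.prod_pos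
      intro w _
      apply pow_pos
      have h0 : (0 : ℝ) ≤ ∑ p : Fin (n + 1) × Fin (n + 1), w (A p.1 p.2) :=
        Finset.sum_nonneg fun p _ => apply_nonneg w _
      linarith
    · rw [inv_pos]; exact_mod_cast hJpos
  · intro x hx hAx
    have hS : ∀ w : InfinitePlace F, (0 : ℝ) ≤ ⨆ j, w (x j) :=
      fun w => Real.iSup_nonneg fun j => apply_nonneg w (x j)
    have hSA : ∀ w : InfinitePlace F, (0 : ℝ) ≤ ⨆ i, w (A.mulVec x i) :=
      fun w => Real.iSup_nonneg fun i => apply_nonneg w _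
    have harch : ∀ w : InfinitePlace F,
        (⨆ i, w (A.mulVec x i))
          ≤ ((∑ p : Fin (n + 1) × Fin (n + 1), w (A p.1 p.2)) + 1) * ⨆ j, w (x j) := by
      intro w
      apply ciSup_le
      intro i
      have h1 : w (A.mulVec x i) ≤ ∑ j, w (A i j) * w (x j) := by
        have hmv : A.mulVec x i = ∑ j, A i j * x j := by
          simp [Matrix.mulVec, dotProduct]
        rw [hmv]
        refine le_trans (w.1.sum_le _ _) (le_of_eq ?_)
        exact Finset.sum_congr rfl fun j _ => map_mul w _ _
      have h2 : ∑ j, w (A i j) * w (x j) ≤ (∑ j, w (A i j)) * ⨆ j, w (x j) := by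
        rw [Finset.sum_mul]
        refine Finset.sum_le_sum fun j _ => ?_
        exact mul_le_mul_of_nonneg_left
          (le_ciSup (f := fun j => w (x j)) (Set.Finite.bddAbove (Set.finite_range _)) j) (apply_nonneg w _)
      have h3 : (∑ j, w (A i j)) ≤ (∑ p : Fin (n + 1) × Fin (n + 1), w (A p.1 p.2)) + 1 := by
        rw [Fintype.sum_prod_type]
        have h4 : (∑ j, w (A i j)) ≤ ∑ i', ∑ j, w (A i' j) :=
          Finset.single_le_sum
            (fun i' _ => Finset.sum_nonneg fun j _ => apply_nonneg w _) (Finset.mem_univ i)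
        linarith
      calc w (A.mulVec x i) ≤ ∑ j, w (A i j) * w (x j) := h1
        _ ≤ (∑ j, w (A i j)) * ⨆ j, w (x j) := h2
        _ ≤ _ := mul_le_mul_of_nonneg_right h3 (hS w)
    have harchprod : (∏ w : InfinitePlace F, (⨆ i, w (A.mulVec x i)) ^ w.mult)
        ≤ (∏ w : InfinitePlace F,
            ((∑ p : Fin (n + 1) × Fin (n + 1), w (A p.1 p.2)) + 1) ^ w.mult)
          * ∏ w : InfinitePlace F, (⨆ j, w (x j)) ^ w.mult := by
      rw [← Finset.prod_mul_distrib]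
      apply Finset.prod_le_prod
      · intro w _; exact pow_nonneg (hSA w) _
      · intro w _
        rw [← mul_pow]
        exact pow_le_pow_left₀ (hSA w) (harch w) _
    have hIAx_le : (∑ i, FractionalIdeal.spanSingleton (𝓞 F)⁰ (A.mulVec x i))
        ≤ J * ∑ i, FractionalIdeal.spanSingleton (𝓞 F)⁰ (x i) := by
      apply fi_sum_le
      intro i _
      rw [FractionalIdeal.spanSingleton_le_iff_mem, ← FractionalIdeal.mem_coe,
        FractionalIdeal.coe_mul]
      have hmv : A.mulVec x i = ∑ j, A i j * x j := by
        simp [Matrix.mulVec, dotProduct]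
      rw [hmv]
      apply Submodule.sum_mem
      intro j _
      exact Submodule.mul_mem_mul (FractionalIdeal.mem_coe.mpr (hAmem i j))
        (FractionalIdeal.mem_coe.mpr (fi_mem_sum x j))
    have hIx0 := fi_ideal_ne_zero hx
    have hIAx0 := fi_ideal_ne_zero hAx
    have hnormle : FractionalIdeal.absNorm J
          * FractionalIdeal.absNorm (∑ i, FractionalIdeal.spanSingleton (𝓞 F)⁰ (x i))
        ≤ FractionalIdeal.absNorm
            (∑ i, FractionalIdeal.spanSingleton (𝓞 F)⁰ (A.mulVec x i)) := by
      rw [← map_mul]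
      exact fi_absNorm_le_of_le hIAx0 (mul_ne_zero hJ0 hIx0) hIAx_le
    have hfin : ((FractionalIdeal.absNorm
          (∑ i, FractionalIdeal.spanSingleton (𝓞 F)⁰ (A.mulVec x i)) : ℚ) : ℝ)⁻¹
        ≤ ((FractionalIdeal.absNorm J : ℚ) : ℝ)⁻¹
          * ((FractionalIdeal.absNorm
              (∑ i, FractionalIdeal.spanSingleton (𝓞 F)⁰ (x i)) : ℚ) : ℝ)⁻¹ := by
      rw [← mul_inv]
      apply inv_anti₀
      · exact_mod_cast mul_pos hJpos (fi_absNorm_pos hIx0)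
      · exact_mod_cast hnormle
    unfold heightVec
    calc (∏ w : InfinitePlace F, (⨆ i, w (A.mulVec x i)) ^ w.mult)
          * ((FractionalIdeal.absNorm
              (∑ i, FractionalIdeal.spanSingleton (𝓞 F)⁰ (A.mulVec x i)) : ℚ) : ℝ)⁻¹
        ≤ ((∏ w : InfinitePlace F,
              ((∑ p : Fin (n + 1) × Fin (n + 1), w (A p.1 p.2)) + 1) ^ w.mult)
            * ∏ w : InfinitePlace F, (⨆ j, w (x j)) ^ w.mult)
          * (((FractionalIdeal.absNorm J : ℚ) : ℝ)⁻¹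
            * ((FractionalIdeal.absNorm
                (∑ i, FractionalIdeal.spanSingleton (𝓞 F)⁰ (x i)) : ℚ) : ℝ)⁻¹) := by
          have hnn : (0 : ℝ) ≤ ((FractionalIdeal.absNorm
              (∑ i, FractionalIdeal.spanSingleton (𝓞 F)⁰ (A.mulVec x i)) : ℚ) : ℝ)⁻¹ := by
            have := FractionalIdeal.absNorm_nonneg
              (∑ i, FractionalIdeal.spanSingleton (𝓞 F)⁰ (A.mulVec x i))
            rw [inv_nonneg]
            exact_mod_cast this
          refine mul_le_mul harchprod hfin hnn ?_
          exact mul_nonneg (Finset.prod_nonneg fun w _ => pow_nonneg (by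
            have : (0 : ℝ) ≤ ∑ p : Fin (n + 1) × Fin (n + 1), w (A p.1 p.2) :=
              Finset.sum_nonneg fun p _ => apply_nonneg w _
            linarith) _) (Finset.prod_nonneg fun w _ => pow_nonneg (hS w) _)
      _ = ((∏ w : InfinitePlace F,
              ((∑ p : Fin (n + 1) × Fin (n + 1), w (A p.1 p.2)) + 1) ^ w.mult)
            * ((FractionalIdeal.absNorm J : ℚ) : ℝ)⁻¹)
          * ((∏ w : InfinitePlace F, (⨆ j, w (x j)) ^ w.mult)
            * ((FractionalIdeal.absNorm
                (∑ i, FractionalIdeal.spanSingleton (𝓞 F)⁰ (x i)) : ℚ) : ℝ)⁻¹) := by ring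

end aux

/-- **Weil's theorem.** If `γ` and `γ'` are two bases of the space of global sections of a
very ample divisor `D` on a projective variety `W` over a number field `F` (so `γ'` is
obtained from `γ` by an invertible matrix `A` over `F`), then the two associated height
functions agree up to two positive multiplicative constants on `W(F)`. -/

theorem weil_height_comparison (F : Type) [Field F] [NumberField F] (m : ℕ)
    (W : Set (Projectivization F (Fin (m + 1) → F)))
    (A : Matrix (Fin (m + 1)) (Fin (m + 1)) F) (hA : IsUnit A.det) :
    ∃ c₁ c₂ : ℝ, 0 < c₁ ∧ 0 < c₂ ∧ ∀ x ∈ W,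
      c₁ ≤ heightVec F x.rep / heightVec F (A.mulVec x.rep) ∧
      heightVec F x.rep / heightVec F (A.mulVec x.rep) ≤ c₂ := by
  obtain ⟨C, hC, hCle⟩ := heightVec_mulVec_le A
  obtain ⟨C', hC', hC'le⟩ := heightVec_mulVec_le A⁻¹
  refine ⟨C⁻¹, C', inv_pos.mpr hC, hC', ?_⟩
  intro x _
  set v := x.rep with hv
  have hv0 : v ≠ 0 := Projectivization.rep_nonzero x
  have hkey : A⁻¹.mulVec (A.mulVec v) = v := by
    rw [Matrix.mulVec_mulVec, Matrix.nonsing_inv_mul A hA, Matrix.one_mulVec]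
  have hAv0 : A.mulVec v ≠ 0 := by
    intro h0
    apply hv0
    rw [← hkey, h0, Matrix.mulVec_zero]
  have h1 : heightVec F (A.mulVec v) ≤ C * heightVec F v := hCle v hv0 hAv0
  have h2 : heightVec F v ≤ C' * heightVec F (A.mulVec v) := by
    have := hC'le (A.mulVec v) hAv0 (by rw [hkey]; exact hv0)
    rwa [hkey] at this
  have hposAv : 0 < heightVec F (A.mulVec v) := heightVec_pos hAv0
  constructor
  · rw [le_div_iff₀ hposAv]
    calc C⁻¹ * heightVec F (A.mulVec v) ≤ C⁻¹ * (C * heightVec F v) :=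
      mul_le_mul_of_nonneg_left h1 (inv_nonneg.mpr hC.le)
    _ = heightVec F v := by field_simp
  · rw [div_le_iff₀ hposAv]
    exact h2
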